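/- Let G be a finite group with a subgroup H having an ordered generating system, and suppose there exist elements a₁,…,a_n of G and positive integers m₁,…,m_n with m₁⋯m_n = [G:H], such that the products a₁^{i₁}⋯a_n^{i_n} for 0 ≤ i_k < m_k lie in pairwise distinct left cosets of H. Then G has an ordered generating system. -/

import Mathlib

/-- `(a, m)` is an *ordered generating system* of the group `G` if every `m k` is positive
and every `g : G` has a unique representation `g = a 0 ^ i 0 * a 1 ^ i 1 * ⋯ * a (n-1) ^ i (n-1)`
with `0 ≤ i k < m k` for all `k`. -/
def IsOGS {G : Type*} [Group G] {n : ℕ} (a : Fin n → G) (m : Fin n → ℕ) : Prop :=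
  (∀ k, 0 < m k) ∧
    ∀ g : G, ∃! i : (k : Fin n) → Fin (m k),
      g = (List.ofFn fun k => a k ^ ((i k : ℕ))).prod

/-- A group `G` has an ordered generating system if some tuple of elements together with
some bounds forms one. -/
def HasOGS (G : Type*) [Group G] : Prop :=
  ∃ (n : ℕ) (a : Fin n → G) (m : Fin n → ℕ), IsOGS a m

section Aux

variable {n₁ n₂ : ℕ} {m₁ : Fin n₁ → ℕ} {m₂ : Fin n₂ → ℕ}

/-- Combine index tuples along `Fin.append`. -/
def appIdx (i₁ : ∀ k, Fin (m₁ k)) (i₂ : ∀ k, Fin (m₂ k)) :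
    ∀ k, Fin (Fin.append m₁ m₂ k) :=
  fun k => Fin.addCases (motive := fun k => Fin (Fin.append m₁ m₂ k))
    (fun j => Fin.cast (Fin.append_left m₁ m₂ j).symm (i₁ j))
    (fun j => Fin.cast (Fin.append_right m₁ m₂ j).symm (i₂ j)) k

lemma appIdx_left (i₁ : ∀ k, Fin (m₁ k)) (i₂ : ∀ k, Fin (m₂ k)) (j : Fin n₁) :
    appIdx i₁ i₂ (Fin.castAdd n₂ j) = Fin.cast (Fin.append_left m₁ m₂ j).symm (i₁ j) := by
  simp [appIdx]

lemma appIdx_right (i₁ : ∀ k, Fin (m₁ k)) (i₂ : ∀ k, Fin (m₂ k)) (j : Fin n₂) :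
    appIdx i₁ i₂ (Fin.natAdd n₁ j) = Fin.cast (Fin.append_right m₁ m₂ j).symm (i₂ j) := by
  simp [appIdx]

/-- The equivalence between pairs of index tuples and index tuples over the appended bounds. -/
def appEquiv {n₁ n₂ : ℕ} (m₁ : Fin n₁ → ℕ) (m₂ : Fin n₂ → ℕ) :
    ((∀ k, Fin (m₁ k)) × (∀ k, Fin (m₂ k))) ≃ (∀ k, Fin (Fin.append m₁ m₂ k)) where
  toFun p := appIdx p.1 p.2
  invFun i :=
    ⟨fun k => Fin.cast (Fin.append_left m₁ m₂ k) (i (Fin.castAdd n₂ k)),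
     fun k => Fin.cast (Fin.append_right m₁ m₂ k) (i (Fin.natAdd n₁ k))⟩
  left_inv p := by
    ext k <;> simp [appIdx_left, appIdx_right]
  right_inv i := by
    funext k
    induction k using Fin.addCases with
    | left j => simp [appIdx_left]
    | right j => simp [appIdx_right]

lemma prod_append {G : Type*} [Group G] (a₁ : Fin n₁ → G) (a₂ : Fin n₂ → G)
    (i₁ : ∀ k, Fin (m₁ k)) (i₂ : ∀ k, Fin (m₂ k)) :
    (List.ofFn fun k => Fin.append a₁ a₂ k ^ ((appIdx i₁ i₂ k : ℕ))).prod =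
      (List.ofFn fun k => a₁ k ^ ((i₁ k : ℕ))).prod *
        (List.ofFn fun k => a₂ k ^ ((i₂ k : ℕ))).prod := by
  rw [List.ofFn_add, List.prod_append]
  change (List.ofFn fun i => Fin.append a₁ a₂ (Fin.castAdd n₂ i) ^ ((appIdx i₁ i₂ (Fin.castAdd n₂ i) : ℕ))).prod * _ = _
  simp only [appIdx_left, appIdx_right, Fin.append_left, Fin.append_right, Fin.coe_cast]

end Aux

theorem hasOGS_of_coset_transversal {G : Type*} [Group G] [Fintype G]
    (H : Subgroup G) (hH : HasOGS H)
    {n : ℕ} (a : Fin n → G) (m : Fin n → ℕ) (hm : ∀ k, 0 < m k)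
    (hprod : ∏ k, m k = H.index)
    (hinj : Function.Injective fun i : (k : Fin n) → Fin (m k) =>
      (((List.ofFn fun k => a k ^ ((i k : ℕ))).prod : G) : G ⧸ H)) :
    HasOGS G := by
  obtain ⟨nb, b, mb, hmb, hb⟩ := hH
  have : Fintype (G ⧸ H) := Fintype.ofFinite _
  set P : ((k : Fin n) → Fin (m k)) → G :=
    fun i => (List.ofFn fun k => a k ^ ((i k : ℕ))).prod with hP
  set Q : ((k : Fin nb) → Fin (mb k)) → G :=
    fun j => (List.ofFn fun k => (b k : G) ^ ((j k : ℕ))).prod with hQ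
  have hQcoe : ∀ j : (k : Fin nb) → Fin (mb k),
      Q j = (((List.ofFn fun k => b k ^ ((j k : ℕ))).prod : H) : G) := by
    intro j
    have := map_list_prod H.subtype (List.ofFn fun k => b k ^ ((j k : ℕ)))
    simp only [List.map_ofFn, Function.comp_def, map_pow, Subgroup.coe_subtype,
      SubgroupClass.coe_pow] at this
    simpa [hQ] using this.symm
  have hQmem : ∀ j, Q j ∈ H := fun j => by rw [hQcoe]; exact SetLike.coe_mem _
  have hcard : Fintype.card ((k : Fin n) → Fin (m k)) = Fintype.card (G ⧸ H) := by
    simp only [Fintype.card_pi, Fintype.card_fin]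
    rw [hprod, Subgroup.index_eq_card, Nat.card_eq_fintype_card]
  have hbij : Function.Bijective fun i : (k : Fin n) → Fin (m k) => ((P i : G) : G ⧸ H) :=
    (Fintype.bijective_iff_injective_and_card _).2 ⟨hinj, hcard⟩
  refine ⟨n + nb, Fin.append a (fun k => (b k : G)), Fin.append m mb, ?_, ?_⟩
  · intro k
    induction k using Fin.addCases with
    | left j => simpa [Fin.append_left] using hm j
    | right j => simpa [Fin.append_right] using hmb j
  · intro g
    rw [← (appEquiv m mb).existsUnique_congr_right]
    have key : ∀ p : ((k : Fin n) → Fin (m k)) × ((k : Fin nb) → Fin (mb k)),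
        (List.ofFn fun k => Fin.append a (fun k => (b k : G)) k ^
          (((appEquiv m mb p) k : ℕ))).prod = P p.1 * Q p.2 := by
      intro p; exact prod_append a _ p.1 p.2
    simp only [key]
    obtain ⟨i, hi⟩ := hbij.2 (g : G ⧸ H)
    have hmem : (P i)⁻¹ * g ∈ H := QuotientGroup.eq.1 hi
    obtain ⟨j, hj, hjuniq⟩ := hb ⟨(P i)⁻¹ * g, hmem⟩
    have hQj : Q j = (P i)⁻¹ * g := by rw [hQcoe, ← hj]
    refine ⟨⟨i, j⟩, by simp [hQj], ?_⟩
    rintro ⟨i', j'⟩ h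
    simp only at h
    have hii : i' = i := by
      apply hinj
      show ((P i' : G) : G ⧸ H) = ((P i : G) : G ⧸ H)
      have hi' : ((P i : G) : G ⧸ H) = ↑g := hi
      rw [hi']
      exact (QuotientGroup.eq.2 (by rw [h]; simpa using hQmem j')).symm
    subst hii
    have hQQ : Q j' = Q j := by
      rw [hQj]
      rw [h]; group
    have hj' : (⟨(P i')⁻¹ * g, hmem⟩ : H) = (List.ofFn fun k => b k ^ ((j' k : ℕ))).prod := by
      apply Subtype.ext
      show (P i')⁻¹ * g = _
      rw [← hQcoe, hQQ, hQj]
    rw [hjuniq j' hj']
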